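/- The function H̃ is strictly decreasing on the interval (0, 1/√2) and strictly increasing on the interval [1/√2, +∞). -/

import Mathlib

open Filter Set

/-- `w` is the root of `q (z^3 - z) + 1 = 0` with `Im w ≥ 0`, `Re w > 0` having the
smallest real part among all such roots. -/
def IsQtilde (q : ℝ) (w : ℂ) : Prop :=
  (q : ℂ) * (w ^ 3 - w) + 1 = 0 ∧ 0 ≤ w.im ∧ 0 < w.re ∧
    ∀ z : ℂ, (q : ℂ) * (z ^ 3 - z) + 1 = 0 → 0 ≤ z.im → 0 < z.re → w.re ≤ z.re

/-- `H̃(q) = |(q̃ - 1)/(q̃ + 1)| · exp(q · Re(q̃²))` where `q̃` is the distinguished root. -/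
noncomputable def Htilde (q : ℝ) : ℝ :=
  ‖(Classical.epsilon (IsQtilde q) - 1) / (Classical.epsilon (IsQtilde q) + 1)‖ *
    Real.exp (q * ((Classical.epsilon (IsQtilde q)) ^ 2).re)


namespace HtAux

noncomputable def P (a : ℝ) : ℝ := 8*a^3 - 2*a
noncomputable def psi (t : ℝ) : ℝ := t - t^3
noncomputable def W (a : ℝ) : ℂ := ⟨a, Real.sqrt (3*a^2 - 1)⟩
noncomputable def L (a : ℝ) : ℝ :=
  Real.log (2*a-1) - Real.log (2*a+1) + (1-2*a^2)/(4*a^3-a)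
noncomputable def M (t : ℝ) : ℝ :=
  Real.log (1-t) - Real.log (1+t) + t/(1-t^2)



lemma sqrt3_facts : (0:ℝ) < Real.sqrt 3 ∧ Real.sqrt 3 ^ 2 = 3 := by
  constructor
  · positivity
  · rw [sq]; exact Real.mul_self_sqrt (by norm_num)

-- basic consequences of a ≥ 1/√3
lemma a_facts {a : ℝ} (ha : 1 / Real.sqrt 3 ≤ a) : 1 ≤ 3 * a^2 ∧ 0 < a ∧ 0 < P a := by
  obtain ⟨h1, h2⟩ := sqrt3_facts
  have hs : 1 ≤ Real.sqrt 3 * a := by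
    rw [div_le_iff₀ h1] at ha
    nlinarith
  have h3 : 1 ≤ 3 * a^2 := by nlinarith
  have h4 : 0 < a := by nlinarith
  refine ⟨h3, h4, ?_⟩
  unfold P; nlinarith

-- factorization: for z with q(z^3-z)+1=0, z ∈ {W a, conj (W a), -2a}
lemma root_cases {a : ℝ} (ha : 1 / Real.sqrt 3 ≤ a) {z : ℂ}
    (hz : ((1 / P a : ℝ) : ℂ) * (z ^ 3 - z) + 1 = 0) :
    z = W a ∨ z = (starRingEnd ℂ) (W a) ∨ z = -(2*a : ℝ) := by
  obtain ⟨h1, h2, h3⟩ := a_facts ha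
  have hb : (Real.sqrt (3*a^2-1))^2 = 3*a^2-1 := by
    rw [sq]; exact Real.mul_self_sqrt (by linarith)
  set b := Real.sqrt (3*a^2-1) with hbdef
  have hP : ((P a : ℝ) : ℂ) ≠ 0 := by
    exact_mod_cast ne_of_gt h3
  have key : z ^ 3 - z + (P a : ℂ) = 0 := by
    have h := hz
    push_cast at h
    field_simp at h
    linear_combination h
  have hfac : (z - W a) * (z - (starRingEnd ℂ) (W a)) * (z + (2*a:ℝ)) = 0 := by
    have hbC : ((b:ℂ))^2 = 3*(a:ℂ)^2 - 1 := by exact_mod_cast hb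
    rw [show W a = (a:ℂ) + (b:ℂ) * Complex.I by
      apply Complex.ext <;> simp [W, hbdef]]
    rw [show (starRingEnd ℂ) ((a:ℂ) + (b:ℂ)*Complex.I) = (a:ℂ) - (b:ℂ)*Complex.I by
      simp [Complex.ext_iff]]
    have : (z - ((a:ℂ) + (b:ℂ)*Complex.I)) * (z - ((a:ℂ) - (b:ℂ)*Complex.I)) * (z + (2*a:ℝ))
        = z^3 - z + (P a : ℂ) := by
      have hbI : ((b:ℂ)*Complex.I)^2 = -(3*(a:ℂ)^2 - 1) := by
        rw [mul_pow, Complex.I_sq, hbC]; ring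
      push_cast [P]
      linear_combination (-(z:ℂ) - 2*(a:ℂ)) * hbI
    rw [this, key]
  rcases mul_eq_zero.1 hfac with h | h
  · rcases mul_eq_zero.1 h with h | h
    · left; linear_combination h
    · right; left; linear_combination h
  · right; right; linear_combination h



lemma isQtilde_W {a : ℝ} (ha : 1 / Real.sqrt 3 ≤ a) : IsQtilde (1 / P a) (W a) := by
  obtain ⟨h1, h2, h3⟩ := a_facts ha
  have hb : (Real.sqrt (3*a^2-1))^2 = 3*a^2-1 := by
    rw [sq]; exact Real.mul_self_sqrt (by linarith)
  set b := Real.sqrt (3*a^2-1) with hbdef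
  have hbC : ((b:ℂ))^2 = 3*(a:ℂ)^2 - 1 := by exact_mod_cast hb
  have hPC : ((P a : ℝ) : ℂ) ≠ 0 := by exact_mod_cast ne_of_gt h3
  have hWform : W a = (a:ℂ) + (b:ℂ) * Complex.I := by
    apply Complex.ext <;> simp [W, hbdef]
  have hroot : ((1 / P a : ℝ) : ℂ) * ((W a) ^ 3 - W a) + 1 = 0 := by
    rw [hWform]
    have hbI : ((b:ℂ)*Complex.I)^2 = -(3*(a:ℂ)^2 - 1) := by
      rw [mul_pow, Complex.I_sq, hbC]; ring
    have hPval : ((P a : ℝ) : ℂ) = 8*(a:ℂ)^3 - 2*(a:ℂ) := by push_cast [P]; ring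
    push_cast
    rw [div_mul_eq_mul_div, div_add' _ _ _ hPC, div_eq_zero_iff]
    left
    rw [hPval]
    linear_combination (((a:ℂ) + b*Complex.I) + 2*(a:ℂ)) * hbI
  refine ⟨hroot, ?_, ?_, ?_⟩
  · simp [W]
  · simpa [W] using h2
  · intro z hz _ hzre
    rcases root_cases ha hz with h | h | h
    · simp [W, h]
    · simp [W, h]
    · exfalso; rw [h] at hzre; simp at hzre; nlinarith

lemma isQtilde_unique_W {a : ℝ} (ha : 1 / Real.sqrt 3 ≤ a) {w : ℂ}
    (hw : IsQtilde (1 / P a) w) : w = W a := by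
  obtain ⟨h1, h2, h3⟩ := a_facts ha
  obtain ⟨hr, him, hre, _⟩ := hw
  rcases root_cases ha hr with h | h | h
  · exact h
  · -- w = conj (W a); then im w = -b ≤ 0 and ≥ 0 so b = 0 and conj W = W
    have hb0 : Real.sqrt (3*a^2-1) ≤ 0 := by
      have : w.im = -(Real.sqrt (3*a^2-1)) := by rw [h]; simp [W]
      linarith [this ▸ him]
    have hb0' : Real.sqrt (3*a^2-1) = 0 :=
      le_antisymm hb0 (Real.sqrt_nonneg _)
    rw [h]
    apply Complex.ext <;> simp [W, hb0']
  · exfalso; rw [h] at hre; simp at hre; nlinarith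

lemma epsilon_eq_W {a : ℝ} (ha : 1 / Real.sqrt 3 ≤ a) :
    Classical.epsilon (IsQtilde (1 / P a)) = W a :=
  isQtilde_unique_W ha (Classical.epsilon_spec ⟨W a, isQtilde_W ha⟩)


lemma t_facts {t : ℝ} (ht0 : 0 < t) (ht : t ≤ 1 / Real.sqrt 3) :
    3 * t^2 ≤ 1 ∧ t < 1 ∧ 0 < psi t := by
  have h1 : (0:ℝ) < Real.sqrt 3 := by positivity
  have h2 : Real.sqrt 3 ^ 2 = 3 := by rw [sq]; exact Real.mul_self_sqrt (by norm_num)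
  rw [le_div_iff₀ h1] at ht
  have h3 : 3 * t^2 ≤ 1 := by nlinarith
  have h4 : t < 1 := by nlinarith
  exact ⟨h3, h4, by unfold psi; nlinarith⟩

lemma root_cases_real {t : ℝ} (ht0 : 0 < t) (ht : t ≤ 1 / Real.sqrt 3) {z : ℂ}
    (hz : ((1 / psi t : ℝ) : ℂ) * (z ^ 3 - z) + 1 = 0) :
    z = (t:ℂ) ∨ z = (((-t + Real.sqrt (4 - 3*t^2))/2 : ℝ) : ℂ) ∨
      z = (((-t - Real.sqrt (4 - 3*t^2))/2 : ℝ) : ℂ) := by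
  obtain ⟨h1, h2, h3⟩ := t_facts ht0 ht
  have hs : (Real.sqrt (4 - 3*t^2))^2 = 4 - 3*t^2 := by
    rw [sq]; exact Real.mul_self_sqrt (by nlinarith)
  set s := Real.sqrt (4 - 3*t^2) with hsdef
  have hsC : ((s:ℂ))^2 = 4 - 3*(t:ℂ)^2 := by exact_mod_cast hs
  have hP : ((psi t : ℝ) : ℂ) ≠ 0 := by exact_mod_cast ne_of_gt h3
  have key : z ^ 3 - z + (psi t : ℂ) = 0 := by
    have h := hz
    push_cast at h
    field_simp at h
    linear_combination h
  have hfac : (z - (t:ℂ)) * (z - (((-t + s)/2 : ℝ):ℂ)) * (z - (((-t - s)/2 : ℝ):ℂ)) = 0 := by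
    have : (z - (t:ℂ)) * (z - (((-t + s)/2 : ℝ):ℂ)) * (z - (((-t - s)/2 : ℝ):ℂ))
        = z^3 - z + (psi t : ℂ) := by
      push_cast [psi]
      linear_combination (- (z - (t:ℂ))/4) * hsC
    rw [this, key]
  rcases mul_eq_zero.1 hfac with h | h
  · rcases mul_eq_zero.1 h with h | h
    · left; linear_combination h
    · right; left; linear_combination h
  · right; right; linear_combination h

lemma isQtilde_t {t : ℝ} (ht0 : 0 < t) (ht : t ≤ 1 / Real.sqrt 3) :
    IsQtilde (1 / psi t) (t:ℂ) := by
  obtain ⟨h1, h2, h3⟩ := t_facts ht0 ht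
  have hs : (Real.sqrt (4 - 3*t^2))^2 = 4 - 3*t^2 := by
    rw [sq]; exact Real.mul_self_sqrt (by nlinarith)
  have hsnn : 0 ≤ Real.sqrt (4 - 3*t^2) := Real.sqrt_nonneg _
  set s := Real.sqrt (4 - 3*t^2) with hsdef
  have hPC : ((psi t : ℝ) : ℂ) ≠ 0 := by exact_mod_cast ne_of_gt h3
  have hroot : ((1 / psi t : ℝ) : ℂ) * ((t:ℂ) ^ 3 - (t:ℂ)) + 1 = 0 := by
    push_cast
    rw [div_mul_eq_mul_div, div_add' _ _ _ hPC, div_eq_zero_iff]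
    left
    push_cast [psi]; ring
  have hts : t ≤ (-t + s)/2 := by nlinarith
  refine ⟨hroot, by simp, by simpa using ht0, ?_⟩
  intro z hz _ hzre
  rcases root_cases_real ht0 ht hz with h | h | h
  · simp [h]
  · rw [h]; simpa using hts
  · exfalso; rw [h] at hzre; simp at hzre; nlinarith

lemma isQtilde_unique_t {t : ℝ} (ht0 : 0 < t) (ht : t ≤ 1 / Real.sqrt 3) {w : ℂ}
    (hw : IsQtilde (1 / psi t) w) : w = (t:ℂ) := by
  obtain ⟨h1, h2, h3⟩ := t_facts ht0 ht
  have hs : (Real.sqrt (4 - 3*t^2))^2 = 4 - 3*t^2 := by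
    rw [sq]; exact Real.mul_self_sqrt (by nlinarith)
  have hsnn : 0 ≤ Real.sqrt (4 - 3*t^2) := Real.sqrt_nonneg _
  set s := Real.sqrt (4 - 3*t^2) with hsdef
  obtain ⟨hr, him, hre, hmin⟩ := hw
  have hts : t ≤ (-t + s)/2 := by nlinarith
  rcases root_cases_real ht0 ht hr with h | h | h
  · exact h
  · -- w is the larger positive root; minimality forces equality with t
    have hle : w.re ≤ t := by
      have := hmin (t:ℂ) (isQtilde_t ht0 ht).1 (by simp) (by simpa using ht0)
      simpa using this
    have : w.re = (-t + s)/2 := by rw [h]; simp [hsdef]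
    have heq : (-t + s)/2 = t := le_antisymm (by linarith [this ▸ hle]) hts
    rw [h, heq]
  · exfalso; rw [h] at hre; simp at hre; nlinarith

lemma epsilon_eq_t {t : ℝ} (ht0 : 0 < t) (ht : t ≤ 1 / Real.sqrt 3) :
    Classical.epsilon (IsQtilde (1 / psi t)) = (t:ℂ) :=
  isQtilde_unique_t ht0 ht (Classical.epsilon_spec ⟨(t:ℂ), isQtilde_t ht0 ht⟩)



lemma sqrt_eq_exp_half_log {r : ℝ} (hr : 0 < r) :
    Real.sqrt r = Real.exp (Real.log r / 2) := by
  have h : Real.exp (Real.log r / 2) ^ 2 = r := by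
    rw [sq, ← Real.exp_add]
    rw [show Real.log r / 2 + Real.log r / 2 = Real.log r by ring]
    exact Real.exp_log hr
  conv_lhs => rw [← h]
  rw [Real.sqrt_sq (Real.exp_pos _).le]

lemma Htilde_complex {a : ℝ} (ha : 1 / Real.sqrt 3 ≤ a) :
    Htilde (1 / P a) = Real.exp (L a / 2) := by
  obtain ⟨h1, h2, h3⟩ := a_facts ha
  have h2a : 1 < 2*a := by nlinarith
  have hb : (Real.sqrt (3*a^2-1))^2 = 3*a^2-1 := by
    rw [sq]; exact Real.mul_self_sqrt (by linarith)
  set b := Real.sqrt (3*a^2-1) with hbdef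
  unfold Htilde
  rw [epsilon_eq_W ha]
  have e1 : Complex.normSq (W a - 1) = 4*a^2 - 2*a := by
    simp only [Complex.normSq_apply, W, Complex.sub_re, Complex.sub_im,
      Complex.one_re, Complex.one_im]
    simp only [← hbdef]
    nlinarith
  have e2 : Complex.normSq (W a + 1) = 4*a^2 + 2*a := by
    simp only [Complex.normSq_apply, W, Complex.add_re, Complex.add_im,
      Complex.one_re, Complex.one_im]
    simp only [← hbdef]
    nlinarith
  have e3 : ((W a)^2).re = 1 - 2*a^2 := by
    simp only [sq, Complex.mul_re, W]
    have hb' : Real.sqrt (3*(a*a)-1) * Real.sqrt (3*(a*a)-1) = 3*(a*a)-1 :=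
      Real.mul_self_sqrt (by nlinarith)
    nlinarith [hb']
  have habs : ‖(W a - 1)/(W a + 1)‖ = Real.exp ((Real.log (2*a-1) - Real.log (2*a+1))/2) := by
    rw [norm_div, Complex.norm_def, Complex.norm_def, e1, e2,
      ← Real.sqrt_div (by nlinarith)]
    rw [show (4*a^2-2*a)/(4*a^2+2*a) = (2*a-1)/(2*a+1) by
      rw [show 4*a^2-2*a = (2*a)*(2*a-1) by ring, show 4*a^2+2*a = (2*a)*(2*a+1) by ring]
      exact mul_div_mul_left _ _ (by linarith)]
    rw [sqrt_eq_exp_half_log (by apply div_pos <;> linarith)]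
    rw [Real.log_div (by linarith) (by linarith)]
  rw [habs, e3, ← Real.exp_add]
  congr 1
  have h4 : 4*a^3 - a ≠ 0 := by nlinarith
  have hP : P a ≠ 0 := ne_of_gt h3
  rw [show P a = 2*(4*a^3-a) by unfold P; ring]
  unfold L P at *
  generalize 4*a^3-a = X at *
  ring

lemma Htilde_real {t : ℝ} (ht0 : 0 < t) (ht : t ≤ 1 / Real.sqrt 3) :
    Htilde (1 / psi t) = Real.exp (M t) := by
  obtain ⟨h1, h2, h3⟩ := t_facts ht0 ht
  unfold Htilde
  rw [epsilon_eq_t ht0 ht]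
  have e1 : ((t:ℂ) - 1)/((t:ℂ)+1) = (((t-1)/(t+1) : ℝ) : ℂ) := by push_cast; ring
  have e2 : (((t:ℂ))^2).re = t^2 := by
    simp [sq, Complex.mul_re]
  rw [e1, e2, Complex.norm_real, Real.norm_eq_abs]
  have habs : |(t-1)/(t+1)| = (1-t)/(1+t) := by
    rw [abs_div, abs_of_neg (by linarith), abs_of_pos (by linarith)]
    ring_nf
  rw [habs]
  have hpos : (0:ℝ) < (1-t)/(1+t) := by apply div_pos <;> linarith
  rw [show (1-t)/(1+t) = Real.exp (Real.log ((1-t)/(1+t))) by rw [Real.exp_log hpos]]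
  rw [← Real.exp_add, Real.log_div (by linarith) (by linarith)]
  congr 1
  unfold M psi
  have h4 : 1 - t^2 ≠ 0 := by nlinarith
  have h5 : t - t^3 ≠ 0 := by nlinarith [t_facts ht0 ht]
  field_simp


lemma hasDerivAt_L {a : ℝ} (ha : 1/2 < a) :
    HasDerivAt L ((24*a^4-14*a^2+1)/(a^2*(2*a-1)^2*(2*a+1)^2)) a := by
  have h0 : (0:ℝ) < a := by linarith
  have h1 : 2*a - 1 ≠ 0 := by intro h; nlinarith
  have h2 : 2*a + 1 ≠ 0 := by intro h; nlinarith
  have h3 : 4*a^3 - a ≠ 0 := by intro h; nlinarith [sq_nonneg a, sq_nonneg (a-1)]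
  have d1 : HasDerivAt (fun x : ℝ => Real.log (2*x-1)) (2/(2*a-1)) a := by
    have h : HasDerivAt (fun x : ℝ => 2*x-1) 2 a := by
      simpa using ((hasDerivAt_id a).const_mul (2:ℝ)).sub_const 1
    exact h.log h1
  have d2 : HasDerivAt (fun x : ℝ => Real.log (2*x+1)) (2/(2*a+1)) a := by
    have h : HasDerivAt (fun x : ℝ => 2*x+1) 2 a := by
      simpa using ((hasDerivAt_id a).const_mul (2:ℝ)).add_const 1
    exact h.log h2
  have du : HasDerivAt (fun x : ℝ => 1-2*x^2) (-(4*a)) a := by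
    have h := ((hasDerivAt_pow 2 a).const_mul (2:ℝ)).const_sub 1
    norm_num at h
    exact h.congr_deriv (by ring)
  have dv : HasDerivAt (fun x : ℝ => 4*x^3-x) (12*a^2-1) a := by
    have h := ((hasDerivAt_pow 3 a).const_mul (4:ℝ)).sub (hasDerivAt_id a)
    norm_num at h
    exact h.congr_deriv (by ring)
  have d3 : HasDerivAt (fun x : ℝ => (1-2*x^2)/(4*x^3-x))
      ((-(4*a)*(4*a^3-a) - (1-2*a^2)*(12*a^2-1))/(4*a^3-a)^2) a := du.div dv h3
  have H : HasDerivAt L (2/(2*a-1) - 2/(2*a+1) +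
      (-(4*a)*(4*a^3-a) - (1-2*a^2)*(12*a^2-1))/(4*a^3-a)^2) a := (d1.sub d2).add d3
  convert H using 1
  have h4 : (4*a^3-a) = a*(2*a-1)*(2*a+1) := by ring
  rw [div_sub_div _ _ h1 h2, div_add_div _ _ (mul_ne_zero h1 h2) (pow_ne_zero 2 h3),
    div_eq_div_iff (by positivity) (mul_ne_zero (mul_ne_zero h1 h2) (pow_ne_zero 2 h3))]
  ring

lemma hasDerivAt_M {t : ℝ} (h0 : 0 < t) (h1 : t < 1) :
    HasDerivAt M ((3*t^2-1)/(1-t^2)^2) t := by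
  have e1 : 1 - t ≠ 0 := by intro h; nlinarith
  have e2 : 1 + t ≠ 0 := by intro h; nlinarith
  have e3 : 1 - t^2 ≠ 0 := by intro h; nlinarith
  have d1 : HasDerivAt (fun x : ℝ => Real.log (1-x)) (-1/(1-t)) t := by
    have h : HasDerivAt (fun x : ℝ => 1-x) (-1) t := by
      simpa using (hasDerivAt_id t).const_sub 1
    exact h.log e1
  have d2 : HasDerivAt (fun x : ℝ => Real.log (1+x)) (1/(1+t)) t := by
    have h : HasDerivAt (fun x : ℝ => 1+x) 1 t := by
      simpa using (hasDerivAt_id t).const_add 1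
    exact h.log e2
  have dv : HasDerivAt (fun x : ℝ => 1-x^2) (-(2*t)) t := by
    simpa using (hasDerivAt_pow 2 t).const_sub 1
  have d3 : HasDerivAt (fun x : ℝ => x/(1-x^2))
      ((1*(1-t^2) - t*(-(2*t)))/(1-t^2)^2) t := (hasDerivAt_id t).div dv e3
  have H : HasDerivAt M (-1/(1-t) - 1/(1+t) +
      (1*(1-t^2) - t*(-(2*t)))/(1-t^2)^2) t := (d1.sub d2).add d3
  convert H using 1
  field_simp
  ring

lemma sqrt2_facts : (0:ℝ) < Real.sqrt 2 ∧ Real.sqrt 2 ^ 2 = 2 := by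
  refine ⟨by positivity, ?_⟩
  rw [sq]; exact Real.mul_self_sqrt (by norm_num)

lemma sqrt3_facts' : (0:ℝ) < Real.sqrt 3 ∧ Real.sqrt 3 ^ 2 = 3 := by
  refine ⟨by positivity, ?_⟩
  rw [sq]; exact Real.mul_self_sqrt (by norm_num)

lemma half_lt_inv_sqrt2 : (1:ℝ)/2 < 1/Real.sqrt 2 := by
  obtain ⟨h1, h2⟩ := sqrt2_facts
  rw [div_lt_div_iff₀ (by norm_num) h1]
  nlinarith

lemma inv_sqrt3_lt_inv_sqrt2 : 1/Real.sqrt 3 < 1/Real.sqrt 2 := by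
  obtain ⟨h1, h2⟩ := sqrt2_facts
  obtain ⟨h3, h4⟩ := sqrt3_facts'
  rw [div_lt_div_iff₀ h3 h1]
  nlinarith

lemma half_lt_inv_sqrt3 : (1:ℝ)/2 < 1/Real.sqrt 3 := by
  obtain ⟨h3, h4⟩ := sqrt3_facts'
  rw [div_lt_div_iff₀ (by norm_num) h3]
  nlinarith

lemma L_strictMonoOn : StrictMonoOn L (Set.Ici (1/Real.sqrt 2)) := by
  have hdom : ∀ x ∈ Set.Ici (1/Real.sqrt 2), 1/2 < x := fun x hx =>
    lt_of_lt_of_le half_lt_inv_sqrt2 hx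
  apply strictMonoOn_of_deriv_pos (convex_Ici _)
  · exact fun x hx => ((hasDerivAt_L (hdom x hx)).continuousAt).continuousWithinAt
  · intro x hx
    rw [interior_Ici] at hx
    have hx2 : 1/2 < x := lt_trans half_lt_inv_sqrt2 hx
    rw [(hasDerivAt_L hx2).deriv]
    obtain ⟨h1, h2⟩ := sqrt2_facts
    have hx' : 1/Real.sqrt 2 < x := hx
    rw [div_lt_iff₀ h1] at hx'
    have hgt : 1 < 2*x^2 := by nlinarith
    have hnum : 0 < 24*x^4-14*x^2+1 := by nlinarith
    have hden : 0 < x^2*(2*x-1)^2*(2*x+1)^2 := by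
      have : 0 < x := by linarith
      have h3 : 0 < 2*x-1 := by linarith
      positivity
    positivity

lemma L_strictAntiOn : StrictAntiOn L (Set.Icc (1/Real.sqrt 3) (1/Real.sqrt 2)) := by
  have hdom : ∀ x ∈ Set.Icc (1/Real.sqrt 3) (1/Real.sqrt 2), 1/2 < x := fun x hx =>
    lt_of_lt_of_le half_lt_inv_sqrt3 hx.1
  apply strictAntiOn_of_deriv_neg (convex_Icc _ _)
  · exact fun x hx => ((hasDerivAt_L (hdom x hx)).continuousAt).continuousWithinAt
  · intro x hx
    rw [interior_Icc] at hx
    have hx2 : 1/2 < x := lt_trans half_lt_inv_sqrt3 hx.1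
    rw [(hasDerivAt_L hx2).deriv]
    obtain ⟨h1, h2⟩ := sqrt2_facts
    obtain ⟨h3, h4⟩ := sqrt3_facts'
    have hlt : 2*x^2 < 1 := by
      have := hx.2
      rw [lt_div_iff₀ h1] at this
      nlinarith
    have hgt : 1 < 3*x^2 := by
      have := hx.1
      rw [div_lt_iff₀ h3] at this
      nlinarith
    have hnum : 24*x^4-14*x^2+1 < 0 := by nlinarith
    have hden : 0 < x^2*(2*x-1)^2*(2*x+1)^2 := by
      have h0 : 0 < x := by linarith
      have h5 : 0 < 2*x-1 := by linarith
      positivity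
    exact div_neg_of_neg_of_pos hnum hden

lemma M_strictAntiOn : StrictAntiOn M (Set.Ioc 0 (1/Real.sqrt 3)) := by
  obtain ⟨h3, h4⟩ := sqrt3_facts'
  have hlt1 : 1/Real.sqrt 3 < 1 := by
    rw [div_lt_one h3]; nlinarith
  apply strictAntiOn_of_deriv_neg (convex_Ioc _ _)
  · intro x hx
    exact ((hasDerivAt_M hx.1 (lt_of_le_of_lt hx.2 hlt1)).continuousAt).continuousWithinAt
  · intro x hx
    rw [interior_Ioc] at hx
    have hx1 : x < 1 := lt_trans hx.2 hlt1
    rw [(hasDerivAt_M hx.1 hx1).deriv]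
    have hlt : 3*x^2 < 1 := by
      have h6 := hx.2
      rw [lt_div_iff₀ h3] at h6
      nlinarith [mul_pos hx.1 h3, hx.1]
    apply div_neg_of_neg_of_pos (by nlinarith)
    have : 1 - x^2 > 0 := by nlinarith
    positivity


lemma s3 : (0:ℝ) < Real.sqrt 3 ∧ Real.sqrt 3 ^ 2 = 3 :=
  ⟨by positivity, by rw [sq]; exact Real.mul_self_sqrt (by norm_num)⟩
lemma s2 : (0:ℝ) < Real.sqrt 2 ∧ Real.sqrt 2 ^ 2 = 2 :=
  ⟨by positivity, by rw [sq]; exact Real.mul_self_sqrt (by norm_num)⟩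

lemma L_eq_two_M : L (1/Real.sqrt 3) = 2 * M (1/Real.sqrt 3) := by
  obtain ⟨h3, h4⟩ := s3
  set c : ℝ := 1/Real.sqrt 3 with hc
  have hc0 : 0 < c := by positivity
  have hc2 : c^2 = 1/3 := by rw [hc, div_pow, h4]; norm_num
  have hc1 : c < 1 := by nlinarith
  have hchalf : 1/2 < c := by
    rw [hc, div_lt_div_iff₀ (by norm_num) h3]; nlinarith
  have p1 : (0:ℝ) < 2*c-1 := by linarith
  have p2 : (0:ℝ) < 2*c+1 := by linarith
  have p3 : (0:ℝ) < 1-c := by linarith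
  have p4 : (0:ℝ) < 1+c := by linarith
  unfold L M
  have e1 : Real.log (2*c-1) - Real.log (2*c+1) = Real.log ((2*c-1)/(2*c+1)) :=
    (Real.log_div (ne_of_gt p1) (ne_of_gt p2)).symm
  have e2 : Real.log (1-c) - Real.log (1+c) = Real.log ((1-c)/(1+c)) :=
    (Real.log_div (ne_of_gt p3) (ne_of_gt p4)).symm
  rw [e1]
  rw [mul_add, mul_sub, show (2:ℝ) * Real.log (1-c) = Real.log ((1-c)^2) by
      rw [Real.log_pow]; push_cast; ring,
    show (2:ℝ) * Real.log (1+c) = Real.log ((1+c)^2) by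
      rw [Real.log_pow]; push_cast; ring]
  rw [show Real.log ((1-c)^2) - Real.log ((1+c)^2) = Real.log ((1-c)^2/(1+c)^2) from
    (Real.log_div (by positivity) (by positivity)).symm]
  have harg : (2*c-1)/(2*c+1) = (1-c)^2/(1+c)^2 := by
    rw [div_eq_div_iff (by positivity) (by positivity)]
    nlinarith [hc2]
  rw [harg]
  have hden1 : 4*c^3-c ≠ 0 := by nlinarith
  have hden2 : 1-c^2 ≠ 0 := by nlinarith
  have hfrac : (1-2*c^2)/(4*c^3-c) = 2*(c/(1-c^2)) := by
    rw [div_eq_iff hden1]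
    field_simp
    nlinarith [hc2]
  rw [hfrac]

lemma P_strictMono {a1 a2 : ℝ} (h1 : 1/Real.sqrt 3 ≤ a1) (h : a1 < a2) : P a1 < P a2 := by
  obtain ⟨h3, h4⟩ := s3
  have h0 : 0 < a1 := lt_of_lt_of_le (by positivity) h1
  have hp : 1 ≤ 3*a1^2 := by
    rw [div_le_iff₀ h3] at h1
    nlinarith
  unfold P
  nlinarith [sq_nonneg (a2-a1), sq_nonneg (a2+a1), mul_pos h0 (sub_pos.2 h)]

lemma psi_strictMono {t1 t2 : ℝ} (h0 : 0 < t1) (h : t1 < t2) (h2 : t2 ≤ 1/Real.sqrt 3) :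
    psi t1 < psi t2 := by
  obtain ⟨h3, h4⟩ := s3
  have hp : 3*t2^2 ≤ 1 := by
    rw [le_div_iff₀ h3] at h2
    nlinarith [mul_pos (lt_trans h0 h) h3]
  unfold psi
  nlinarith [mul_pos h0 (sub_pos.2 h), sq_nonneg (t2-t1)]

lemma P_pos {a : ℝ} (ha : 1/Real.sqrt 3 ≤ a) : 0 < P a := by
  obtain ⟨h3, h4⟩ := s3
  have h0 : 0 < a := lt_of_lt_of_le (by positivity) ha
  have hp : 1 ≤ 3*a^2 := by
    rw [div_le_iff₀ h3] at ha
    nlinarith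
  unfold P; nlinarith

lemma psi_pos {t : ℝ} (h0 : 0 < t) (ht : t ≤ 1/Real.sqrt 3) : 0 < psi t := by
  obtain ⟨h3, h4⟩ := s3
  have hp : 3*t^2 ≤ 1 := by
    rw [le_div_iff₀ h3] at ht
    nlinarith [mul_pos h0 h3]
  unfold psi; nlinarith

lemma contP : Continuous P := by unfold P; continuity

lemma P_eq_psi : P (1/Real.sqrt 3) = psi (1/Real.sqrt 3) := by
  obtain ⟨h3, h4⟩ := s3
  have hc2 : (1/Real.sqrt 3)^2 = 1/3 := by rw [div_pow, h4]; norm_num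
  unfold P psi
  have : (1/Real.sqrt 3)^3 = (1/Real.sqrt 3) * (1/3) := by
    rw [pow_succ, hc2]; ring
  rw [this]; ring

lemma P_half_sqrt2 : P (1/Real.sqrt 2) = Real.sqrt 2 := by
  obtain ⟨h1, h2⟩ := s2
  have hc2 : (1/Real.sqrt 2)^2 = 1/2 := by rw [div_pow, h2]; norm_num
  unfold P
  have h5 : (1/Real.sqrt 2)^3 = (1/Real.sqrt 2) * (1/2) := by
    rw [pow_succ, hc2]; ring
  rw [h5]
  rw [show 8*((1/Real.sqrt 2) * (1/2)) - 2*(1/Real.sqrt 2) = 2/Real.sqrt 2 by ring]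
  rw [div_eq_iff (ne_of_gt h1)]
  nlinarith

lemma exists_a {q : ℝ} (h0 : 0 < q) (hq : q ≤ 1 / P (1/Real.sqrt 3)) :
    ∃ a, 1/Real.sqrt 3 ≤ a ∧ 1 / P a = q := by
  obtain ⟨h3, h4⟩ := s3
  have hc0 : (0:ℝ) < 1/Real.sqrt 3 := by positivity
  have hPc : 0 < P (1/Real.sqrt 3) := P_pos le_rfl
  have hy : P (1/Real.sqrt 3) ≤ 1/q := by
    rw [le_div_iff₀ h0]
    calc P (1/Real.sqrt 3) * q ≤ P (1/Real.sqrt 3) * (1 / P (1/Real.sqrt 3)) := by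
          exact mul_le_mul_of_nonneg_left hq (le_of_lt hPc)
      _ = 1 := by field_simp
  have hc1 : 1/Real.sqrt 3 ≤ 1 := by
    rw [div_le_one h3]; nlinarith
  set X : ℝ := 1 + 1/q with hX
  clear_value X
  have hX1 : 1 ≤ X := by
    have : 0 < 1/q := by positivity
    linarith
  have hcX : 1/Real.sqrt 3 ≤ X := le_trans hc1 hX1
  have hPX : 1/q ≤ P X := by
    have hq1 : 1/q ≤ X := by rw [hX]; linarith
    unfold P
    have k1 : 0 ≤ (X-1)*X^2 := mul_nonneg (by linarith) (sq_nonneg X)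
    have k2 : 0 ≤ (X-1)*X := mul_nonneg (by linarith) (by linarith)
    nlinarith [k1, k2]
  have hIVT := intermediate_value_Icc hcX contP.continuousOn
  have hmem : (1/q) ∈ Set.Icc (P (1/Real.sqrt 3)) (P X) := ⟨hy, hPX⟩
  obtain ⟨a, ha, hPa⟩ := hIVT hmem
  refine ⟨a, ha.1, ?_⟩
  rw [hPa, one_div_one_div]

lemma contpsi : Continuous psi := by unfold psi; continuity

lemma exists_t {q : ℝ} (hq : 1 / psi (1/Real.sqrt 3) ≤ q) :
    ∃ t, 0 < t ∧ t ≤ 1/Real.sqrt 3 ∧ 1 / psi t = q := by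
  obtain ⟨h3, h4⟩ := s3
  have hc0 : (0:ℝ) < 1/Real.sqrt 3 := by positivity
  have hpsic : 0 < psi (1/Real.sqrt 3) := psi_pos hc0 le_rfl
  have hq0 : 0 < q := lt_of_lt_of_le (by positivity) hq
  have hy0 : 0 < 1/q := by positivity
  have hy : 1/q ≤ psi (1/Real.sqrt 3) := by
    rw [div_le_iff₀ hq0]
    have h5 : psi (1/Real.sqrt 3) * (1/psi (1/Real.sqrt 3)) ≤ psi (1/Real.sqrt 3) * q :=
      mul_le_mul_of_nonneg_left hq (le_of_lt hpsic)
    calc (1:ℝ) = psi (1/Real.sqrt 3) * (1/psi (1/Real.sqrt 3)) := by field_simp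
      _ ≤ psi (1/Real.sqrt 3) * q := h5
  set t0 : ℝ := min (1/q) (1/Real.sqrt 3) with ht0def
  have ht00 : 0 < t0 := lt_min hy0 hc0
  have ht0c : t0 ≤ 1/Real.sqrt 3 := min_le_right _ _
  have hpsit0 : psi t0 ≤ 1/q := by
    have h5 : psi t0 ≤ t0 := by
      unfold psi
      nlinarith [pow_pos ht00 3]
    exact le_trans h5 (min_le_left _ _)
  have hIVT := intermediate_value_Icc ht0c contpsi.continuousOn
  obtain ⟨t, ht, hpsit⟩ := hIVT ⟨hpsit0, hy⟩
  exact ⟨t, lt_of_lt_of_le ht00 ht.1, ht.2, by rw [hpsit, one_div_one_div]⟩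

lemma inv_lt_order {x y : ℝ} (hx : 0 < x) (hy : 0 < y) (h : 1/x < 1/y) : y < x := by
  rw [div_lt_div_iff₀ hx hy] at h; linarith

lemma inv_le_order {x y : ℝ} (hx : 0 < x) (hy : 0 < y) (h : 1/x ≤ 1/y) : y ≤ x := by
  rw [div_le_div_iff₀ hx hy] at h; linarith

lemma lt_of_P_lt {a1 a2 : ℝ} (h1 : 1/Real.sqrt 3 ≤ a1) (h : P a2 < P a1) : a2 < a1 := by
  by_contra h'
  push_neg at h'
  rcases eq_or_lt_of_le h' with he | hl
  · rw [he] at h; exact lt_irrefl _ h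
  · exact absurd (P_strictMono h1 hl) (not_lt.2 (le_of_lt h))

lemma le_of_P_le {a1 a2 : ℝ} (h2 : 1/Real.sqrt 3 ≤ a2) (h : P a1 ≤ P a2) : a1 ≤ a2 := by
  by_contra h'
  push_neg at h'
  exact absurd (P_strictMono h2 h') (not_lt.2 h)

lemma lt_of_psi_lt {t1 t2 : ℝ} (h1 : 0 < t1) (h2 : t2 ≤ 1/Real.sqrt 3)
    (h : psi t2 < psi t1) : t2 < t1 := by
  by_contra h'
  push_neg at h'
  rcases eq_or_lt_of_le h' with he | hl
  · rw [he] at h; exact lt_irrefl _ h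
  · exact absurd (psi_strictMono h1 hl h2) (not_lt.2 (le_of_lt h))

lemma inv_P_c2 : 1 / P (1/Real.sqrt 2) = 1/Real.sqrt 2 := by rw [P_half_sqrt2]

lemma c2_lt_Q0 : 1/Real.sqrt 2 < 1 / P (1/Real.sqrt 3) := by
  obtain ⟨h2p, h2s⟩ := s2
  obtain ⟨h3p, h3s⟩ := s3
  have hPc : 0 < P (1/Real.sqrt 3) := P_pos le_rfl
  rw [div_lt_div_iff₀ h2p hPc]
  have hPval : P (1/Real.sqrt 3) ≤ 1 := by
    unfold P
    have h1 : (1/Real.sqrt 3)^3 = (1/Real.sqrt 3)*(1/3) := by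
      rw [pow_succ, div_pow, h3s]; ring
    rw [h1]
    have hc1 : 1/Real.sqrt 3 ≤ 1 := by
      rw [div_le_one h3p]; nlinarith
    have hc0 : 0 < 1/Real.sqrt 3 := by positivity
    nlinarith
  have h12 : (1:ℝ) < Real.sqrt 2 := by nlinarith
  nlinarith

end HtAux

open HtAux

/-- H̃ is strictly decreasing on (0, 1/√2) and strictly increasing on [1/√2, ∞). -/
theorem Htilde_monotone :
    StrictAntiOn Htilde (Set.Ioo 0 (1 / Real.sqrt 2)) ∧
    StrictMonoOn Htilde (Set.Ici (1 / Real.sqrt 2)) := by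
  have hc32 : 1/Real.sqrt 3 < 1/Real.sqrt 2 := inv_sqrt3_lt_inv_sqrt2
  have hc20 : (0:ℝ) < 1/Real.sqrt 2 := by positivity
  have hQ0pos : 0 < 1 / P (1/Real.sqrt 3) := by
    have := P_pos (le_refl (1/Real.sqrt 3)); positivity
  have hPc2pos : 0 < P (1/Real.sqrt 2) := P_pos hc32.le
  constructor
  · -- StrictAntiOn on Ioo 0 (1/√2)
    intro q1 hq1 q2 hq2 h12
    obtain ⟨a1, ha1, hqa1⟩ := exists_a hq1.1 (le_trans hq1.2.le c2_lt_Q0.le)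
    obtain ⟨a2, ha2, hqa2⟩ := exists_a hq2.1 (le_trans hq2.2.le c2_lt_Q0.le)
    have hPa1 : 0 < P a1 := P_pos ha1
    have hPa2 : 0 < P a2 := P_pos ha2
    -- a1 > 1/√2
    have ha1gt : 1/Real.sqrt 2 < a1 := by
      apply lt_of_P_lt ha1
      apply inv_lt_order hPa1 hPc2pos
      rw [hqa1, inv_P_c2]; exact hq1.2
    have ha2gt : 1/Real.sqrt 2 < a2 := by
      apply lt_of_P_lt ha2
      apply inv_lt_order hPa2 hPc2pos
      rw [hqa2, inv_P_c2]; exact hq2.2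
    have ha21 : a2 < a1 := by
      apply lt_of_P_lt ha1
      apply inv_lt_order hPa1 hPa2
      rw [hqa1, hqa2]; exact h12
    have hL := L_strictMonoOn (Set.mem_Ici.2 ha2gt.le) (Set.mem_Ici.2 ha1gt.le) ha21
    rw [← hqa1, ← hqa2, Htilde_complex ha1, Htilde_complex ha2]
    exact Real.exp_lt_exp.2 (by linarith)
  · -- StrictMonoOn on Ici (1/√2)
    intro q1 hq1 q2 hq2 h12
    have hq10 : 0 < q1 := lt_of_lt_of_le hc20 hq1
    have hq20 : 0 < q2 := lt_of_lt_of_le hc20 hq2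
    rcases le_or_gt q2 (1 / P (1/Real.sqrt 3)) with hA | hA
    · -- both in complex regime, a's in [1/√3, 1/√2]
      obtain ⟨a1, ha1, hqa1⟩ := exists_a hq10 (le_trans h12.le hA)
      obtain ⟨a2, ha2, hqa2⟩ := exists_a hq20 hA
      have hPa1 : 0 < P a1 := P_pos ha1
      have hPa2 : 0 < P a2 := P_pos ha2
      have ha1le : a1 ≤ 1/Real.sqrt 2 := by
        apply le_of_P_le hc32.le
        apply inv_le_order hPc2pos hPa1
        rw [hqa1, inv_P_c2]; exact hq1
      have ha2le : a2 ≤ 1/Real.sqrt 2 := by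
        apply le_of_P_le hc32.le
        apply inv_le_order hPc2pos hPa2
        rw [hqa2, inv_P_c2]; exact le_trans hq1 h12.le
      have ha21 : a2 < a1 := by
        apply lt_of_P_lt ha1
        apply inv_lt_order hPa1 hPa2
        rw [hqa1, hqa2]; exact h12
      have hL := L_strictAntiOn (Set.mem_Icc.2 ⟨ha2, ha2le⟩) (Set.mem_Icc.2 ⟨ha1, ha1le⟩) ha21
      rw [← hqa1, ← hqa2, Htilde_complex ha1, Htilde_complex ha2]
      exact Real.exp_lt_exp.2 (by linarith)
    · rcases le_or_gt (1 / P (1/Real.sqrt 3)) q1 with hB | hB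
      · -- both in real regime
        have hB1 : 1 / psi (1/Real.sqrt 3) ≤ q1 := by rw [← P_eq_psi]; exact hB
        have hB2 : 1 / psi (1/Real.sqrt 3) ≤ q2 := le_trans hB1 h12.le
        obtain ⟨t1, ht10, ht1c, hqt1⟩ := exists_t hB1
        obtain ⟨t2, ht20, ht2c, hqt2⟩ := exists_t hB2
        have hps1 : 0 < psi t1 := psi_pos ht10 ht1c
        have hps2 : 0 < psi t2 := psi_pos ht20 ht2c
        have ht21 : t2 < t1 := by
          apply lt_of_psi_lt ht10 ht2c
          apply inv_lt_order hps1 hps2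
          rw [hqt1, hqt2]; exact h12
        have hM := M_strictAntiOn (Set.mem_Ioc.2 ⟨ht20, ht2c⟩) (Set.mem_Ioc.2 ⟨ht10, ht1c⟩) ht21
        rw [← hqt1, ← hqt2, Htilde_real ht10 ht1c, Htilde_real ht20 ht2c]
        exact Real.exp_lt_exp.2 (by linarith)
      · -- mixed: q1 in complex regime, q2 in real regime
        obtain ⟨a1, ha1, hqa1⟩ := exists_a hq10 hB.le
        have hPa1 : 0 < P a1 := P_pos ha1
        have ha1le : a1 ≤ 1/Real.sqrt 2 := by
          apply le_of_P_le hc32.le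
          apply inv_le_order hPc2pos hPa1
          rw [hqa1, inv_P_c2]; exact hq1
        have ha1gt : 1/Real.sqrt 3 < a1 := by
          apply lt_of_P_lt ha1
          apply inv_lt_order hPa1 (P_pos le_rfl)
          rw [hqa1]; exact hB
        have hA2 : 1 / psi (1/Real.sqrt 3) ≤ q2 := by rw [← P_eq_psi]; exact hA.le
        obtain ⟨t2, ht20, ht2c, hqt2⟩ := exists_t hA2
        have hps2 : 0 < psi t2 := psi_pos ht20 ht2c
        have hpsc : 0 < psi (1/Real.sqrt 3) := psi_pos (by positivity) le_rfl
        have ht2lt : t2 < 1/Real.sqrt 3 := by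
          apply lt_of_psi_lt (by positivity) ht2c
          apply inv_lt_order hpsc hps2
          rw [hqt2, ← P_eq_psi]; exact hA
        have hL := L_strictAntiOn (Set.mem_Icc.2 ⟨le_rfl, hc32.le⟩)
          (Set.mem_Icc.2 ⟨ha1gt.le, ha1le⟩) ha1gt
        have hM := M_strictAntiOn (Set.mem_Ioc.2 ⟨ht20, ht2c⟩)
          (Set.mem_Ioc.2 ⟨by positivity, le_rfl⟩) ht2lt
        have hLM := L_eq_two_M
        rw [← hqa1, ← hqt2, Htilde_complex ha1, Htilde_real ht20 ht2c]
        exact Real.exp_lt_exp.2 (by linarith)
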